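/- Let G ∈ ℝ^{3×3}, ω ∈ ℝ³, γ ∈ ℝ, ε > 0 and r > 0 be such that qᵀ( (γ − tr(G)/2) I₃ + (G + Gᵀ)/2 ) q ≥ r ‖q‖² for all q ∈ ℝ³. Define the 6×6 matrices 𝒦 := [[ε⁻¹ I₃, 0_{3,3}],[0_{3,3}, G − V_ω + γ I₃]] and D := [[0_{3,3}, 0_{3,3}],[0_{3,3}, tr(G) I₃]]. Then 𝒦 + 𝒦ᵀ − D ⪰ 2 min(ε⁻¹, r) I₆, i.e. zᵀ(𝒦 + 𝒦ᵀ − D) z ≥ 2 min(ε⁻¹, r) ‖z‖² for all z ∈ ℝ⁶. (With G = ∇β, ω = ∇×β and D = ∇·𝒜, this is the Friedrichs positivity condition 𝒦 + 𝒦ᵀ − ∇·𝒜 ⪰ 2𝔯_♭ I for the vector diffusion–advection–reaction system under the assumption (γ − (∇·β)/2) I₃ + ∇_s β ⪰ r I₃.) -/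
import Mathlib


open Matrix

/-- The cross-product matrix `V_α`, characterized by `V_α s = α × s`. -/
def crossMat (α : Fin 3 → ℝ) : Matrix (Fin 3) (Fin 3) ℝ :=
  !![0, -α 2, α 1; α 2, 0, -α 0; -α 1, α 0, 0]

/-- If `(γ − tr(G)/2) I₃ + (G + Gᵀ)/2 ⪰ r I₃` with `ε > 0`, `r > 0`, then with
`𝒦 = [[ε⁻¹ I₃, 0],[0, G − V_ω + γ I₃]]` and `D = [[0, 0],[0, tr(G) I₃]]` one has
`𝒦 + 𝒦ᵀ − D ⪰ 2 min(ε⁻¹, r) I₆`: the Friedrichs positivity condition for the vector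
diffusion–advection–reaction system. -/
theorem stmt13 (G : Matrix (Fin 3) (Fin 3) ℝ) (ω : Fin 3 → ℝ) (γ ε r : ℝ)
    (hε : 0 < ε) (hr : 0 < r)
    (hpos : ∀ q : Fin 3 → ℝ,
      r * ∑ i, q i ^ 2 ≤
        q ⬝ᵥ ((γ - G.trace / 2) • (1 : Matrix (Fin 3) (Fin 3) ℝ)
          + (2 : ℝ)⁻¹ • (G + Gᵀ)).mulVec q) :
    let K : Matrix (Fin 3 ⊕ Fin 3) (Fin 3 ⊕ Fin 3) ℝ :=
      Matrix.fromBlocks (ε⁻¹ • 1) 0 0 (G - crossMat ω + γ • 1)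
    let D : Matrix (Fin 3 ⊕ Fin 3) (Fin 3 ⊕ Fin 3) ℝ :=
      Matrix.fromBlocks 0 0 0 (G.trace • 1)
    ∀ z : Fin 3 ⊕ Fin 3 → ℝ,
      2 * min ε⁻¹ r * ∑ i, z i ^ 2 ≤ z ⬝ᵥ (K + Kᵀ - D).mulVec z := by
  intro K D z
  set x : Fin 3 → ℝ := z ∘ Sum.inl with hx
  set y : Fin 3 → ℝ := z ∘ Sum.inr with hy
  have hV : crossMat ω + (crossMat ω)ᵀ = 0 := by
    ext i j
    simp only [Matrix.add_apply, Matrix.transpose_apply, Matrix.zero_apply]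
    fin_cases i <;> fin_cases j <;> simp [crossMat] <;> ring
  have hM : (G - crossMat ω + γ • 1) + (G - crossMat ω + γ • 1)ᵀ - G.trace • (1 : Matrix (Fin 3) (Fin 3) ℝ)
      = (2 : ℝ) • ((γ - G.trace / 2) • (1 : Matrix (Fin 3) (Fin 3) ℝ) + (2 : ℝ)⁻¹ • (G + Gᵀ)) := by
    have h0 : (crossMat ω)ᵀ = -(crossMat ω) := by
      rw [eq_neg_iff_add_eq_zero, add_comm]; exact hV
    simp only [transpose_add, transpose_sub, transpose_smul, transpose_one, h0, smul_add,
      smul_smul]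
    ext i j
    simp [Matrix.add_apply, Matrix.sub_apply, Matrix.smul_apply, Matrix.one_apply,
      Matrix.neg_apply, Matrix.transpose_apply]
    by_cases h : i = j <;> simp [h] <;> ring
  have hKD : K + Kᵀ - D = Matrix.fromBlocks ((2 * ε⁻¹) • 1) 0 0
      ((2 : ℝ) • ((γ - G.trace / 2) • (1 : Matrix (Fin 3) (Fin 3) ℝ) + (2 : ℝ)⁻¹ • (G + Gᵀ))) := by
    show Matrix.fromBlocks (ε⁻¹ • 1) 0 0 (G - crossMat ω + γ • 1)
      + (Matrix.fromBlocks (ε⁻¹ • 1) 0 0 (G - crossMat ω + γ • 1))ᵀ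
      - Matrix.fromBlocks 0 0 0 (G.trace • 1) = _
    rw [fromBlocks_transpose, fromBlocks_add, ← hM]
    ext i j
    rcases i with i | i <;> rcases j with j | j <;>
      simp [Matrix.fromBlocks, Matrix.smul_apply, Matrix.one_apply] <;>
      (try split_ifs) <;> ring
  have hz : z = Sum.elim x y := by funext i; cases i <;> rfl
  rw [hKD, hz, fromBlocks_mulVec]
  simp only [Sum.elim_comp_inl, Sum.elim_comp_inr, Matrix.mulVec_zero, Matrix.zero_mulVec,
    add_zero, zero_add]
  rw [sumElim_dotProduct_sumElim]
  have hsum : ∑ i : Fin 3 ⊕ Fin 3, Sum.elim x y i ^ 2 = (∑ i, x i ^ 2) + ∑ i, y i ^ 2 := by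
    rw [Fintype.sum_sum_type]; rfl
  have h1 : x ⬝ᵥ ((2 * ε⁻¹) • (1 : Matrix (Fin 3) (Fin 3) ℝ)).mulVec x = 2 * ε⁻¹ * ∑ i, x i ^ 2 := by
    rw [Matrix.smul_mulVec, Matrix.one_mulVec, dotProduct_smul]
    simp [dotProduct, Finset.mul_sum, sq]
  have h2 : y ⬝ᵥ ((2 : ℝ) • ((γ - G.trace / 2) • (1 : Matrix (Fin 3) (Fin 3) ℝ)
      + (2 : ℝ)⁻¹ • (G + Gᵀ))).mulVec y
      = 2 * (y ⬝ᵥ ((γ - G.trace / 2) • (1 : Matrix (Fin 3) (Fin 3) ℝ)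
      + (2 : ℝ)⁻¹ • (G + Gᵀ)).mulVec y) := by
    rw [Matrix.smul_mulVec, dotProduct_smul]; rfl
  rw [hsum, h1, h2]
  have hx2 : (0:ℝ) ≤ ∑ i, x i ^ 2 := Finset.sum_nonneg fun i _ => sq_nonneg _
  have hy2 : (0:ℝ) ≤ ∑ i, y i ^ 2 := Finset.sum_nonneg fun i _ => sq_nonneg _
  have h3 := hpos y
  have hm1 : min ε⁻¹ r ≤ ε⁻¹ := min_le_left _ _
  have hm2 : min ε⁻¹ r ≤ r := min_le_right _ _
  nlinarith [mul_le_mul_of_nonneg_right hm1 hx2, mul_le_mul_of_nonneg_right hm2 hy2]
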